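/- Let t ∈ (0,1), λ ∈ ℝ, and let U = M((θ_k),(α_k),(γ_k)). The complex vector space of sequences c ∈ ℂ^ℤ that are generalized eigenvectors of U for e^{iλ} has dimension at most 2; in particular, every eigenvalue of the unitary operator U has multiplicity at most 2. -/

import Mathlib

open Complex

noncomputable section

/-- The Hilbert space `ℓ²(ℤ)`. -/
abbrev H : Type := lp (fun _ : ℤ => ℂ) 2

/-- The canonical orthonormal basis vector `φ_k` of `ℓ²(ℤ)`. -/
def phi (k : ℤ) : H := lp.single 2 k 1

/-- `IsM t r θ α γ U` expresses that the bounded operator `U` on `ℓ²(ℤ)` acts on the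
canonical basis as the monodromy operator `M((θ_k), (α_k), (γ_k))` with transition
coefficient `t` and reflection coefficient `r`. -/
def IsM (t r : ℝ) (θ α γ : ℤ → ℝ) (U : H →L[ℂ] H) : Prop :=
  ∀ k : ℤ,
    U (phi (2 * k)) =
      (Complex.I * r * t * Complex.exp (-Complex.I * ((θ (2 * k) + θ (2 * k - 1) : ℝ) : ℂ))
        * Complex.exp (-Complex.I * ((α (2 * k) - γ (2 * k - 1) : ℝ) : ℂ))) • phi (2 * k - 1)
      + ((r : ℂ) ^ 2 * Complex.exp (-Complex.I * ((θ (2 * k) + θ (2 * k - 1) : ℝ) : ℂ))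
        * Complex.exp (-Complex.I * ((α (2 * k) - α (2 * k - 1) : ℝ) : ℂ))) • phi (2 * k)
      + (Complex.I * r * t * Complex.exp (-Complex.I * ((θ (2 * k) + θ (2 * k + 1) : ℝ) : ℂ))
        * Complex.exp (-Complex.I * ((γ (2 * k) + α (2 * k + 1) : ℝ) : ℂ))) • phi (2 * k + 1)
      - ((t : ℂ) ^ 2 * Complex.exp (-Complex.I * ((θ (2 * k) + θ (2 * k + 1) : ℝ) : ℂ))
        * Complex.exp (-Complex.I * ((γ (2 * k) + γ (2 * k + 1) : ℝ) : ℂ))) • phi (2 * k + 2)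
    ∧
    U (phi (2 * k + 1)) =
      (-((t : ℂ) ^ 2) * Complex.exp (-Complex.I * ((θ (2 * k) + θ (2 * k - 1) : ℝ) : ℂ))
        * Complex.exp (Complex.I * ((γ (2 * k) + γ (2 * k - 1) : ℝ) : ℂ))) • phi (2 * k - 1)
      + (Complex.I * t * r * Complex.exp (-Complex.I * ((θ (2 * k) + θ (2 * k - 1) : ℝ) : ℂ))
        * Complex.exp (Complex.I * ((γ (2 * k) + α (2 * k - 1) : ℝ) : ℂ))) • phi (2 * k)
      + ((r : ℂ) ^ 2 * Complex.exp (-Complex.I * ((θ (2 * k) + θ (2 * k + 1) : ℝ) : ℂ))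
        * Complex.exp (Complex.I * ((α (2 * k) - α (2 * k + 1) : ℝ) : ℂ))) • phi (2 * k + 1)
      + (Complex.I * r * t * Complex.exp (-Complex.I * ((θ (2 * k) + θ (2 * k + 1) : ℝ) : ℂ))
        * Complex.exp (Complex.I * ((α (2 * k) - γ (2 * k + 1) : ℝ) : ℂ))) • phi (2 * k + 2)

end

noncomputable section

/-- `e^{ix}` for a real phase `x`. -/
def cex (x : ℝ) : ℂ := Complex.exp (Complex.I * (x : ℂ))

/-- The matrix element `⟨φ_j, U φ_k⟩`. -/
def matEntry (U : H →L[ℂ] H) (j k : ℤ) : ℂ := inner (𝕜 := ℂ) (phi j) (U (phi k))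

/-- `c` is a generalized eigenvector of `U` for the eigenvalue `μ`:
for every `j`, `Σ_k ⟨φ_j, U φ_k⟩ c_k = μ c_j`. -/
def IsGenEigenvector (U : H →L[ℂ] H) (μ : ℂ) (c : ℤ → ℂ) : Prop :=
  ∀ j : ℤ, HasSum (fun k : ℤ => matEntry U j k * c k) (μ * c j)

end


-- Auxiliary lemmas
section AuxLemmas

lemma phi_apply (i j : ℤ) : (phi i : ∀ _ : ℤ, ℂ) j = if j = i then 1 else 0 := by
  rcases eq_or_ne j i with h|h
  · subst h; simp [phi, lp.single_apply_self]
  · simp [phi, lp.single_apply_ne _ _ _ h, h]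

lemma matEntry_eq (U : H →L[ℂ] H) (j k : ℤ) : matEntry U j k = (U (phi k) : ∀ _ : ℤ, ℂ) j := by
  rw [matEntry, phi, lp.inner_single_left]
  simp

section
variable {t r : ℝ} {θ α γ : ℤ → ℝ} {U : H →L[ℂ] H} (hU : IsM t r θ α γ U)
include hU

lemma matEntry_zero (j k : ℤ) (hk : k < j - 2 ∨ j + 2 < k) : matEntry U j k = 0 := by
  rcases Int.even_or_odd k with ⟨n, hn⟩ | ⟨n, hn⟩
  · have h := (hU n).1
    rw [matEntry_eq, show k = 2*n by omega, h]
    simp only [lp.coeFn_add, lp.coeFn_sub, lp.coeFn_smul, Pi.add_apply, Pi.sub_apply,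
      Pi.smul_apply, phi_apply, smul_eq_mul]
    split_ifs <;> first | (exfalso; omega) | ring
  · have h := (hU n).2
    rw [matEntry_eq, show k = 2*n+1 by omega, h]
    simp only [lp.coeFn_add, lp.coeFn_sub, lp.coeFn_smul, Pi.add_apply, Pi.sub_apply,
      Pi.smul_apply, phi_apply, smul_eq_mul]
    split_ifs <;> first | (exfalso; omega) | ring


-- entries from block hU m : columns 2m, 2m+1, rows 2m+1, 2m+2
lemma ent_a1 (m : ℤ) : matEntry U (2*m+1) (2*m) =
    Complex.I * r * t * Complex.exp (-Complex.I * ((θ (2*m) + θ (2*m+1) : ℝ) : ℂ))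
      * Complex.exp (-Complex.I * ((γ (2*m) + α (2*m+1) : ℝ) : ℂ)) := by
  rw [matEntry_eq, (hU m).1]
  simp only [lp.coeFn_add, lp.coeFn_sub, lp.coeFn_smul, Pi.add_apply, Pi.sub_apply,
    Pi.smul_apply, phi_apply, smul_eq_mul]
  split_ifs <;> first | (exfalso; omega) | ring

lemma ent_b1 (m : ℤ) : matEntry U (2*m+2) (2*m) =
    -((t : ℂ) ^ 2 * Complex.exp (-Complex.I * ((θ (2*m) + θ (2*m+1) : ℝ) : ℂ))
      * Complex.exp (-Complex.I * ((γ (2*m) + γ (2*m+1) : ℝ) : ℂ))) := by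
  rw [matEntry_eq, (hU m).1]
  simp only [lp.coeFn_add, lp.coeFn_sub, lp.coeFn_smul, Pi.add_apply, Pi.sub_apply,
    Pi.smul_apply, phi_apply, smul_eq_mul]
  split_ifs <;> first | (exfalso; omega) | ring

lemma ent_a2 (m : ℤ) : matEntry U (2*m+1) (2*m+1) =
    (r : ℂ) ^ 2 * Complex.exp (-Complex.I * ((θ (2*m) + θ (2*m+1) : ℝ) : ℂ))
      * Complex.exp (Complex.I * ((α (2*m) - α (2*m+1) : ℝ) : ℂ)) := by
  rw [matEntry_eq, (hU m).2]
  simp only [lp.coeFn_add, lp.coeFn_sub, lp.coeFn_smul, Pi.add_apply, Pi.sub_apply,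
    Pi.smul_apply, phi_apply, smul_eq_mul]
  split_ifs <;> first | (exfalso; omega) | ring

lemma ent_b2 (m : ℤ) : matEntry U (2*m+2) (2*m+1) =
    Complex.I * r * t * Complex.exp (-Complex.I * ((θ (2*m) + θ (2*m+1) : ℝ) : ℂ))
      * Complex.exp (Complex.I * ((α (2*m) - γ (2*m+1) : ℝ) : ℂ)) := by
  rw [matEntry_eq, (hU m).2]
  simp only [lp.coeFn_add, lp.coeFn_sub, lp.coeFn_smul, Pi.add_apply, Pi.sub_apply,
    Pi.smul_apply, phi_apply, smul_eq_mul]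
  split_ifs <;> first | (exfalso; omega) | ring

-- entries from block hU (m+1) : columns 2m+2, 2m+3, rows 2m+1, 2m+2
lemma ent_a3 (m : ℤ) : matEntry U (2*m+1) (2*m+2) =
    Complex.I * r * t * Complex.exp (-Complex.I * ((θ (2*(m+1)) + θ (2*(m+1)-1) : ℝ) : ℂ))
      * Complex.exp (-Complex.I * ((α (2*(m+1)) - γ (2*(m+1)-1) : ℝ) : ℂ)) := by
  rw [matEntry_eq, show (2*m+2 : ℤ) = 2*(m+1) by ring, (hU (m+1)).1]
  simp only [lp.coeFn_add, lp.coeFn_sub, lp.coeFn_smul, Pi.add_apply, Pi.sub_apply,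
    Pi.smul_apply, phi_apply, smul_eq_mul]
  split_ifs <;> first | (exfalso; omega) | ring

lemma ent_b3 (m : ℤ) : matEntry U (2*m+2) (2*m+2) =
    (r : ℂ) ^ 2 * Complex.exp (-Complex.I * ((θ (2*(m+1)) + θ (2*(m+1)-1) : ℝ) : ℂ))
      * Complex.exp (-Complex.I * ((α (2*(m+1)) - α (2*(m+1)-1) : ℝ) : ℂ)) := by
  rw [matEntry_eq, show (2*m+2 : ℤ) = 2*(m+1) by ring, (hU (m+1)).1]
  simp only [lp.coeFn_add, lp.coeFn_sub, lp.coeFn_smul, Pi.add_apply, Pi.sub_apply,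
    Pi.smul_apply, phi_apply, smul_eq_mul]
  split_ifs <;> first | (exfalso; omega) | ring

lemma ent_a4 (m : ℤ) : matEntry U (2*m+1) (2*m+3) =
    -((t : ℂ) ^ 2) * Complex.exp (-Complex.I * ((θ (2*(m+1)) + θ (2*(m+1)-1) : ℝ) : ℂ))
      * Complex.exp (Complex.I * ((γ (2*(m+1)) + γ (2*(m+1)-1) : ℝ) : ℂ)) := by
  rw [matEntry_eq, show (2*m+3 : ℤ) = 2*(m+1)+1 by ring, (hU (m+1)).2]
  simp only [lp.coeFn_add, lp.coeFn_sub, lp.coeFn_smul, Pi.add_apply, Pi.sub_apply,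
    Pi.smul_apply, phi_apply, smul_eq_mul]
  split_ifs <;> first | (exfalso; omega) | ring

lemma ent_b4 (m : ℤ) : matEntry U (2*m+2) (2*m+3) =
    Complex.I * t * r * Complex.exp (-Complex.I * ((θ (2*(m+1)) + θ (2*(m+1)-1) : ℝ) : ℂ))
      * Complex.exp (Complex.I * ((γ (2*(m+1)) + α (2*(m+1)-1) : ℝ) : ℂ)) := by
  rw [matEntry_eq, show (2*m+3 : ℤ) = 2*(m+1)+1 by ring, (hU (m+1)).2]
  simp only [lp.coeFn_add, lp.coeFn_sub, lp.coeFn_smul, Pi.add_apply, Pi.sub_apply,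
    Pi.smul_apply, phi_apply, smul_eq_mul]
  split_ifs <;> first | (exfalso; omega) | ring

lemma ent_zero_lo (m : ℤ) : matEntry U (2*m+1) (2*m-1) = 0 := by
  rw [matEntry_eq, show (2*m-1 : ℤ) = 2*(m-1)+1 by ring, (hU (m-1)).2]
  simp only [lp.coeFn_add, lp.coeFn_sub, lp.coeFn_smul, Pi.add_apply, Pi.sub_apply,
    Pi.smul_apply, phi_apply, smul_eq_mul]
  split_ifs <;> first | (exfalso; omega) | ring

lemma ent_zero_hi (m : ℤ) : matEntry U (2*m+2) (2*m+4) = 0 := by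
  rw [matEntry_eq, show (2*m+4 : ℤ) = 2*(m+2) by ring, (hU (m+2)).1]
  simp only [lp.coeFn_add, lp.coeFn_sub, lp.coeFn_smul, Pi.add_apply, Pi.sub_apply,
    Pi.smul_apply, phi_apply, smul_eq_mul]
  split_ifs <;> first | (exfalso; omega) | ring


end


lemma step_fwd_alg {μ a3 a4 b3 b4 u v : ℂ} (hdet : a3*b4 = a4*b3) (ha4 : a4 ≠ 0) (hμ : μ ≠ 0)
    (e1 : (0:ℂ) = a3*u + a4*v) (e2 : μ*u = b3*u + b4*v) : u = 0 ∧ v = 0 := by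
  have hu : u = 0 := by
    have h : a4 * μ * u = 0 := by linear_combination a4 * e2 - b4 * e1 - u * hdet
    simpa [ha4, hμ] using h
  refine ⟨hu, ?_⟩
  rw [hu] at e1
  have h : a4 * v = 0 := by linear_combination -e1
  exact (mul_eq_zero.mp h).resolve_left ha4

lemma step_bwd_alg {μ a1 a2 b1 b2 x y : ℂ} (hdet : a1*b2 = a2*b1) (hb1 : b1 ≠ 0) (hμ : μ ≠ 0)
    (e1 : μ*y = a1*x + a2*y) (e2 : (0:ℂ) = b1*x + b2*y) : x = 0 ∧ y = 0 := by
  have hy : y = 0 := by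
    have h : b1 * μ * y = 0 := by linear_combination b1 * e1 - a1 * e2 - y * hdet
    simpa [hb1, hμ] using h
  rw [hy] at e2
  have hx : b1 * x = 0 := by linear_combination -e2
  exact ⟨(mul_eq_zero.mp hx).resolve_left hb1, hy⟩

lemma exp_prod_eq {x1 x2 x3 x4 : ℂ} (h : x1 + x2 = x3 + x4) :
    Complex.exp x1 * Complex.exp x2 = Complex.exp x3 * Complex.exp x4 := by
  rw [← Complex.exp_add, ← Complex.exp_add, h]

lemma det_aux1 (R T E F1 F2 F3 F4 : ℂ) (hF : F1 * F2 = F3 * F4) :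
    (Complex.I*R*T*E*F1) * (Complex.I*T*R*E*F2) = (-(T^2)*E*F3) * (R^2*E*F4) := by
  have h : (Complex.I*R*T*E*F1) * (Complex.I*T*R*E*F2)
      = (Complex.I*Complex.I) * (R^2*T^2*E^2*(F1*F2)) := by ring
  rw [h, hF, Complex.I_mul_I]; ring

lemma det_aux2 (R T E F1 F2 F3 F4 : ℂ) (hF : F1 * F2 = F3 * F4) :
    (Complex.I*R*T*E*F1) * (Complex.I*R*T*E*F2) = (R^2*E*F3) * (-(T^2*E*F4)) := by
  have h : (Complex.I*R*T*E*F1) * (Complex.I*R*T*E*F2)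
      = (Complex.I*Complex.I) * (R^2*T^2*E^2*(F1*F2)) := by ring
  rw [h, hF, Complex.I_mul_I]; ring

section
variable {t r : ℝ} {θ α γ : ℤ → ℝ} {U : H →L[ℂ] H} (hU : IsM t r θ α γ U)
include hU

lemma rowOdd {μ : ℂ} {c : ℤ → ℂ} (hc : IsGenEigenvector U μ c) (m : ℤ) :
    μ * c (2*m+1) =
      matEntry U (2*m+1) (2*m) * c (2*m) + matEntry U (2*m+1) (2*m+1) * c (2*m+1)
      + matEntry U (2*m+1) (2*m+2) * c (2*m+2) + matEntry U (2*m+1) (2*m+3) * c (2*m+3) := by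
  have h0 : ∀ k ∉ ({2*m, 2*m+1, 2*m+2, 2*m+3} : Finset ℤ),
      matEntry U (2*m+1) k * c k = 0 := by
    intro k hk
    simp only [Finset.mem_insert, Finset.mem_singleton] at hk
    push_neg at hk
    rcases (by omega : k < 2*m-1 ∨ 2*m+3 < k ∨ k = 2*m-1) with h|h|h
    · rw [matEntry_zero hU _ _ (Or.inl (by omega)), zero_mul]
    · rw [matEntry_zero hU _ _ (Or.inr (by omega)), zero_mul]
    · subst h; rw [ent_zero_lo hU, zero_mul]
  have hs : HasSum _ _ := hasSum_sum_of_ne_finset_zero h0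
  have he := (hc (2*m+1)).unique hs
  rw [he, Finset.sum_insert (by simp), Finset.sum_insert (by simp),
    Finset.sum_insert (by simp), Finset.sum_singleton]
  ring

lemma rowEven {μ : ℂ} {c : ℤ → ℂ} (hc : IsGenEigenvector U μ c) (m : ℤ) :
    μ * c (2*m+2) =
      matEntry U (2*m+2) (2*m) * c (2*m) + matEntry U (2*m+2) (2*m+1) * c (2*m+1)
      + matEntry U (2*m+2) (2*m+2) * c (2*m+2) + matEntry U (2*m+2) (2*m+3) * c (2*m+3) := by
  have h0 : ∀ k ∉ ({2*m, 2*m+1, 2*m+2, 2*m+3} : Finset ℤ),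
      matEntry U (2*m+2) k * c k = 0 := by
    intro k hk
    simp only [Finset.mem_insert, Finset.mem_singleton] at hk
    push_neg at hk
    rcases (by omega : k < 2*m ∨ 2*m+4 < k ∨ k = 2*m+4) with h|h|h
    · rw [matEntry_zero hU _ _ (Or.inl (by omega)), zero_mul]
    · rw [matEntry_zero hU _ _ (Or.inr (by omega)), zero_mul]
    · subst h; rw [ent_zero_hi hU, zero_mul]
  have hs : HasSum _ _ := hasSum_sum_of_ne_finset_zero h0
  have he := (hc (2*m+2)).unique hs
  rw [he, Finset.sum_insert (by simp), Finset.sum_insert (by simp),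
    Finset.sum_insert (by simp), Finset.sum_singleton]
  ring


lemma det_fwd (m : ℤ) :
    matEntry U (2*m+1) (2*m+2) * matEntry U (2*m+2) (2*m+3)
      = matEntry U (2*m+1) (2*m+3) * matEntry U (2*m+2) (2*m+2) := by
  rw [ent_a3 hU, ent_b4 hU, ent_a4 hU, ent_b3 hU]
  exact det_aux1 _ _ _ _ _ _ _ (exp_prod_eq (by push_cast; ring))

lemma det_bwd (m : ℤ) :
    matEntry U (2*m+1) (2*m) * matEntry U (2*m+2) (2*m+1)
      = matEntry U (2*m+1) (2*m+1) * matEntry U (2*m+2) (2*m) := by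
  rw [ent_a1 hU, ent_b2 hU, ent_a2 hU, ent_b1 hU]
  exact det_aux2 _ _ _ _ _ _ _ (exp_prod_eq (by push_cast; ring))

lemma step_fwd {μ : ℂ} {c : ℤ → ℂ} (hμ : μ ≠ 0) (ht : (t:ℂ) ≠ 0)
    (hc : IsGenEigenvector U μ c) (m : ℤ) (h0 : c (2*m) = 0) (h1 : c (2*m+1) = 0) :
    c (2*m+2) = 0 ∧ c (2*m+3) = 0 := by
  have e1 := rowOdd hU hc m
  have e2 := rowEven hU hc m
  rw [h0, h1] at e1 e2
  have e1' : (0:ℂ) = matEntry U (2*m+1) (2*m+2) * c (2*m+2)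
      + matEntry U (2*m+1) (2*m+3) * c (2*m+3) := by linear_combination e1
  have e2' : μ * c (2*m+2) = matEntry U (2*m+2) (2*m+2) * c (2*m+2)
      + matEntry U (2*m+2) (2*m+3) * c (2*m+3) := by linear_combination e2
  have ha4 : matEntry U (2*m+1) (2*m+3) ≠ 0 := by
    rw [ent_a4 hU]
    exact mul_ne_zero (mul_ne_zero (neg_ne_zero.mpr (pow_ne_zero _ ht)) (Complex.exp_ne_zero _))
      (Complex.exp_ne_zero _)
  exact step_fwd_alg (det_fwd hU m) ha4 hμ e1' e2'

lemma step_bwd {μ : ℂ} {c : ℤ → ℂ} (hμ : μ ≠ 0) (ht : (t:ℂ) ≠ 0)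
    (hc : IsGenEigenvector U μ c) (m : ℤ) (h2 : c (2*m+2) = 0) (h3 : c (2*m+3) = 0) :
    c (2*m) = 0 ∧ c (2*m+1) = 0 := by
  have e1 := rowOdd hU hc m
  have e2 := rowEven hU hc m
  rw [h2, h3] at e1 e2
  have e1' : μ * c (2*m+1) = matEntry U (2*m+1) (2*m) * c (2*m)
      + matEntry U (2*m+1) (2*m+1) * c (2*m+1) := by linear_combination e1
  have e2' : (0:ℂ) = matEntry U (2*m+2) (2*m) * c (2*m)
      + matEntry U (2*m+2) (2*m+1) * c (2*m+1) := by linear_combination e2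
  have hb1 : matEntry U (2*m+2) (2*m) ≠ 0 := by
    rw [ent_b1 hU]
    exact neg_ne_zero.mpr (mul_ne_zero (mul_ne_zero (pow_ne_zero _ ht)
      (Complex.exp_ne_zero _)) (Complex.exp_ne_zero _))
  exact step_bwd_alg (det_bwd hU m) hb1 hμ e1' e2'

lemma gen_eig_zero {μ : ℂ} {c : ℤ → ℂ} (hμ : μ ≠ 0) (ht : (t:ℂ) ≠ 0)
    (hc : IsGenEigenvector U μ c) (h0 : c 0 = 0) (h1 : c 1 = 0) : ∀ k : ℤ, c k = 0 := by
  have key : ∀ m : ℤ, c (2*m) = 0 ∧ c (2*m+1) = 0 := by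
    intro m
    induction m using Int.induction_on with
    | zero => exact ⟨by simpa using h0, by simpa using h1⟩
    | succ n ih =>
      have h := step_fwd hU hμ ht hc n ih.1 ih.2
      constructor
      · rw [show (2*((n:ℤ)+1)) = 2*(n:ℤ)+2 by ring]; exact h.1
      · rw [show (2*((n:ℤ)+1)+1) = 2*(n:ℤ)+3 by ring]; exact h.2
    | pred n ih =>
      have h := step_bwd hU hμ ht hc (-(n:ℤ)-1)
        (by rw [show (2*(-(n:ℤ)-1)+2) = 2*(-(n:ℤ)) by ring]; exact ih.1)
        (by rw [show (2*(-(n:ℤ)-1)+3) = 2*(-(n:ℤ))+1 by ring]; exact ih.2)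
      exact ⟨h.1, h.2⟩
  intro k
  rcases Int.even_or_odd k with ⟨n, hn⟩ | ⟨n, hn⟩
  · rw [show k = 2*n by omega]; exact (key n).1
  · rw [show k = 2*n+1 by omega]; exact (key n).2

end

lemma single_eq_smul_phi (k : ℤ) (a : ℂ) : lp.single 2 k a = a • phi k := by
  apply lp.ext
  funext j
  rw [lp.coeFn_smul, Pi.smul_apply, phi_apply, smul_eq_mul]
  rcases eq_or_ne j k with h | h
  · subst h; rw [lp.single_apply_self]; simp
  · rw [lp.single_apply_ne _ _ _ h]; simp [h]

lemma inner_phi (j : ℤ) (f : H) : (inner (𝕜 := ℂ) (phi j) f : ℂ) = f j := by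
  rw [phi, lp.inner_single_left]; simp

lemma eig_to_gen {U : H →L[ℂ] H} {μ : ℂ} {x : H} (hx : U x = μ • x) :
    IsGenEigenvector U μ (fun k => x k) := by
  intro j
  have h1 : HasSum (fun k : ℤ => lp.single 2 k (x k)) x := lp.hasSum_single (by norm_num) x
  have h2 := (h1.mapL U).mapL (innerSL ℂ (phi j))
  have heq : (fun k : ℤ => innerSL ℂ (phi j) (U (lp.single 2 k (x k))))
      = fun k => matEntry U j k * x k := by
    funext k
    rw [single_eq_smul_phi, map_smul, map_smul]
    simp only [innerSL_apply_apply, smul_eq_mul, matEntry]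
    ring
  have hval : innerSL ℂ (phi j) (U x) = μ * x j := by
    rw [hx, innerSL_apply_apply, inner_smul_right, inner_phi]
  rw [heq, hval] at h2
  exact h2


end AuxLemmas

/-- The space of generalized eigenvectors of the monodromy operator for `e^{iλ}` has
dimension at most 2: any three of them are linearly dependent. In particular every
eigenvalue of `U` has multiplicity at most 2. -/
theorem gen_eigenvectors_dimension_le_two (t : ℝ) (ht0 : 0 < t) (ht1 : t < 1) (lam : ℝ)
    (θ α γ : ℤ → ℝ) (U : H →L[ℂ] H)
    (hunit : U ∈ unitary (H →L[ℂ] H))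
    (hU : IsM t (Real.sqrt (1 - t ^ 2)) θ α γ U) :
    (∀ c : Fin 3 → (ℤ → ℂ), (∀ i, IsGenEigenvector U (cex lam) (c i)) →
      ¬ LinearIndependent ℂ c) ∧
    (∀ μ : ℂ, Module.rank ℂ ↥(Module.End.eigenspace (U : H →ₗ[ℂ] H) μ) ≤ 2) := by
  have ht : (t : ℂ) ≠ 0 := by exact_mod_cast ht0.ne'
  constructor
  · intro c hc hli
    have hμ : cex lam ≠ 0 := Complex.exp_ne_zero _
    have hv : ¬ LinearIndependent ℂ (fun i : Fin 3 => (![c i 0, c i 1] : Fin 2 → ℂ)) := by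
      intro h
      have h3 := h.fintype_card_le_finrank
      rw [Module.finrank_fin_fun, Fintype.card_fin] at h3
      omega
    obtain ⟨g, hg, i0, hgi⟩ := Fintype.not_linearIndependent_iff.mp hv
    have hd : IsGenEigenvector U (cex lam) (fun k => ∑ i : Fin 3, g i * c i k) := by
      intro j
      have hs : HasSum (fun k : ℤ => ∑ i : Fin 3, g i * (matEntry U j k * c i k))
          (∑ i : Fin 3, g i * (cex lam * c i j)) :=
        hasSum_sum fun i _ => ((hc i) j).mul_left (g i)
      have hL : (fun k : ℤ => matEntry U j k * ∑ i : Fin 3, g i * c i k)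
          = fun k : ℤ => ∑ i : Fin 3, g i * (matEntry U j k * c i k) := by
        funext k; rw [Finset.mul_sum]; exact Finset.sum_congr rfl fun i _ => by ring
      have hR : cex lam * ∑ i : Fin 3, g i * c i j = ∑ i : Fin 3, g i * (cex lam * c i j) := by
        rw [Finset.mul_sum]; exact Finset.sum_congr rfl fun i _ => by ring
      simpa only [hL, hR] using hs
    have h00 : (∑ i : Fin 3, g i * c i 0) = 0 := by
      have h := congrFun hg 0
      simpa [Finset.sum_apply, Matrix.cons_val_zero] using h
    have h11 : (∑ i : Fin 3, g i * c i 1) = 0 := by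
      have h := congrFun hg 1
      simpa [Finset.sum_apply, Matrix.cons_val_one, Matrix.head_cons] using h
    have hz := gen_eig_zero hU hμ ht hd h00 h11
    have hsum : ∑ i : Fin 3, g i • c i = 0 := by
      funext k
      have := hz k
      simpa [Finset.sum_apply, Pi.smul_apply, smul_eq_mul] using this
    exact hgi (Fintype.linearIndependent_iff.mp hli g hsum i0)
  · intro ν
    rcases eq_or_ne ν 0 with rfl | hν
    · rw [Module.End.eigenspace_zero]
      have hker : LinearMap.ker ((U : H →ₗ[ℂ] H)) = ⊥ := by
        rw [LinearMap.ker_eq_bot]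
        intro x y hxy
        have h := hunit.1
        have hx : (star U * U) x = x := by rw [h]; rfl
        have hy : (star U * U) y = y := by rw [h]; rfl
        rw [ContinuousLinearMap.mul_apply] at hx hy
        have : U x = U y := hxy
        rw [← hx, ← hy, this]
      rw [hker]
      simp [rank_bot]
    · set S := Module.End.eigenspace (U : H →ₗ[ℂ] H) ν with hS
      let L : ↥S →ₗ[ℂ] (Fin 2 → ℂ) :=
        { toFun := fun x => ![((x : H) : ∀ _ : ℤ, ℂ) 0, ((x : H) : ∀ _ : ℤ, ℂ) 1]
          map_add' := by
            intro x y; funext i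
            fin_cases i <;>
              simp [lp.coeFn_add, Pi.add_apply]
          map_smul' := by
            intro a x; funext i
            fin_cases i <;>
              simp [lp.coeFn_smul, Pi.smul_apply] }
      have hker : ∀ x : ↥S, L x = 0 → x = 0 := by
        intro x hx
        have hx0 : ((x : H) : ∀ _ : ℤ, ℂ) 0 = 0 := by
          have := congrFun hx 0; simpa [L] using this
        have hx1 : ((x : H) : ∀ _ : ℤ, ℂ) 1 = 0 := by
          have := congrFun hx 1; simpa [L] using this
        have hmem : U (x : H) = ν • (x : H) := Module.End.mem_eigenspace_iff.mp x.2
        have hgen := eig_to_gen hmem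
        have hz := gen_eig_zero hU hν ht hgen hx0 hx1
        have hxz : (x : H) = 0 := by
          apply lp.ext
          funext k
          simp only [lp.coeFn_zero, Pi.zero_apply]
          exact hz k
        exact Subtype.ext (by simp [hxz])
      have hinj : Function.Injective L :=
        LinearMap.ker_eq_bot.mp (LinearMap.ker_eq_bot'.mpr hker)
      calc Module.rank ℂ ↥S ≤ Module.rank ℂ (Fin 2 → ℂ) := LinearMap.rank_le_of_injective L hinj
        _ = 2 := by rw [rank_fin_fun]; norm_num
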